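/- For any MHR distribution H on positive integers with mean μ, E_{h~H}[1 - (1-1/μ)^h] ≥ 1/(2 - 1/μ). -/
import Mathlib

/-- Once `T (i+1)` drops below `q^i`, it stays below (MHR single-crossing). -/
lemma mhr_crossing (T : ℕ → ℝ) (q : ℝ) (hq0 : 0 ≤ q)
    (hT1 : T 1 = 1) (hTnn : ∀ k, 0 ≤ T k)
    (hmono : ∀ k, T (k+1) ≤ T k)
    (hMHR : ∀ k, 1 ≤ k → T (k + 2) / T (k + 1) ≤ T (k + 1) / T k) :
    ∀ i j, i ≤ j → T (i+1) < q ^ i → T (j+1) ≤ q ^ j := by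
  -- ratios are monotone
  have hr : ∀ a k, 1 ≤ a → a ≤ k → T (k+1) / T k ≤ T (a+1) / T a := by
    intro a k ha hak
    induction k, hak using Nat.le_induction with
    | base => exact le_refl _
    | succ n hn ih =>
      calc T (n+1+1) / T (n+1) ≤ T (n+1) / T n := hMHR n (le_trans ha hn)
        _ ≤ T (a+1) / T a := ih
  intro i j hij hi
  -- find a first strict-drop index a ≤ i
  have hex : ∃ a, 1 ≤ a ∧ a ≤ i ∧ T (a+1) < q * T a := by
    by_contra hcon
    push_neg at hcon
    have hall : ∀ k, k ≤ i → q ^ k ≤ T (k+1) := by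
      intro k hk
      induction k with
      | zero => simp [hT1]
      | succ n ihn =>
        have h1 : q ^ n ≤ T (n+1) := ihn (le_trans (Nat.le_succ n) hk)
        have h2 : q * T (n+1) ≤ T (n+2) := hcon (n+1) (Nat.succ_le_succ (Nat.zero_le n)) hk
        calc q ^ (n+1) = q * q ^ n := by ring
          _ ≤ q * T (n+1) := by nlinarith
          _ ≤ T (n+2) := h2
    exact absurd (hall i le_rfl) (not_le.mpr hi)
  obtain ⟨a, ha1, hai, hadrop⟩ := hex
  have hTa : 0 < T a := by
    rcases lt_or_eq_of_le (hTnn a) with h | h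
    · exact h
    · exfalso; rw [← h] at hadrop; nlinarith [hTnn (a+1)]
  have hra : T (a+1) / T a < q := (div_lt_iff₀ hTa).mpr (by linarith [hadrop])
  have hstep : ∀ k, a ≤ k → T (k+1) ≤ q * T k := by
    intro k hak
    rcases lt_or_eq_of_le (hTnn k) with hTk | hTk
    · have h1 : T (k+1) / T k ≤ T (a+1) / T a := hr a k ha1 hak
      have h2 : T (k+1) / T k < q := lt_of_le_of_lt h1 hra
      have := (div_lt_iff₀ hTk).mp h2
      linarith
    · have h0 : T (k+1) ≤ 0 := by rw [hTk]; exact hmono k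
      have h0' : T (k+1) = 0 := le_antisymm h0 (hTnn (k+1))
      rw [h0', ← hTk]; nlinarith
  induction j, hij using Nat.le_induction with
  | base => exact le_of_lt hi
  | succ n hn ih =>
    have h1 : T (n+1+1) ≤ q * T (n+1) := hstep (n+1) (by omega)
    calc T (n+1+1) ≤ q * T (n+1) := h1
      _ ≤ q * q ^ n := by nlinarith
      _ = q ^ (n+1) := by ring

lemma tail_ite_eq (p : ℕ → ℝ) (k : ℕ) :
    ∑' j : ℕ, p (k+1+j) = ∑' n : ℕ, (if k < n then p n else 0) := by
  have hg : Function.Injective (fun j : ℕ => k + 1 + j) := by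
    intro a b h
    simp only at h
    omega
  have hsupp : Function.support (fun n : ℕ => if k < n then p n else 0) ⊆
      Set.range (fun j : ℕ => k + 1 + j) := by
    intro n hn
    simp only [Function.mem_support, ne_eq, ite_eq_right_iff, not_forall] at hn
    obtain ⟨hkn, -⟩ := hn
    refine ⟨n - (k+1), ?_⟩
    show k + 1 + (n - (k+1)) = n
    omega
  have := hg.tsum_eq hsupp
  rw [← this]
  apply tsum_congr
  intro j
  rw [if_pos (by omega)]

-- mean = sum of tails
lemma mean_tails (p : ℕ → ℝ) (hnn : ∀ k, 0 ≤ p k) (hp : Summable p)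
    (hms : Summable (fun k : ℕ => p k * k)) :
    Summable (fun k : ℕ => ∑' j : ℕ, p (k+1+j)) ∧
    ∑' k : ℕ, (∑' j : ℕ, p (k+1+j)) = ∑' k : ℕ, p k * k := by
  set F : ℕ × ℕ → ℝ := fun x => if x.2 < x.1 then p x.1 else 0 with hF
  have hFnn : 0 ≤ F := by
    intro x; by_cases h : x.2 < x.1 <;> simp [hF, h, hnn]
  have hrow : ∀ n, Summable (fun k => F (n, k)) := by
    intro n
    apply summable_of_ne_finset_zero (s := Finset.range n)
    intro k hk
    simp only [Finset.mem_range, not_lt] at hk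
    simp [hF, Nat.not_lt.mpr hk, not_lt_of_ge hk]
  have hrowsum : ∀ n, ∑' k, F (n, k) = p n * n := by
    intro n
    rw [tsum_eq_sum (s := Finset.range n) (by
      intro k hk
      simp only [Finset.mem_range, not_lt] at hk
      simp [hF, not_lt_of_ge hk])]
    simp [hF, Finset.sum_ite_of_true, mul_comm]
  have hFsum : Summable F := by
    rw [summable_prod_of_nonneg hFnn]
    refine ⟨hrow, ?_⟩
    simp only [hrowsum]
    exact hms
  have hcol : ∀ k, Summable (fun n => F (n, k)) := by
    intro k
    apply Summable.of_nonneg_of_le (fun n => hFnn (n, k)) (fun n => ?_) hp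
    by_cases h : k < n <;> simp [hF, h, hnn n]
  have h1 : ∑' x, F x = ∑' n, p n * n := by
    rw [Summable.tsum_prod' hFsum hrow]
    exact tsum_congr hrowsum
  have hGsum : Summable (fun x : ℕ × ℕ => F (x.2, x.1)) := hFsum.prod_symm
  have h2 : ∑' x, F x = ∑' k, ∑' n, F (n, k) := by
    rw [← (Equiv.prodComm ℕ ℕ).tsum_eq F]
    exact Summable.tsum_prod' hGsum hcol
  have hcolsum : ∀ k, ∑' n, F (n, k) = ∑' j : ℕ, p (k+1+j) := by
    intro k; rw [tail_ite_eq]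
  have hsummable : Summable (fun k : ℕ => ∑' j : ℕ, p (k+1+j)) := by
    have := (summable_prod_of_nonneg (f := fun x : ℕ × ℕ => F (x.2, x.1))
      (fun x => hFnn (x.2, x.1))).mp hGsum
    refine this.2.congr fun k => ?_
    exact hcolsum k
  refine ⟨hsummable, ?_⟩
  rw [← h1, h2]
  exact tsum_congr (fun k => (hcolsum k).symm)

lemma expect_eq (p : ℕ → ℝ) (hnn : ∀ k, 0 ≤ p k) (hp : Summable p)
    (q : ℝ) (hq0 : 0 ≤ q) (hq1 : q < 1) :
    ∑' k : ℕ, p k * (1 - q ^ k)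
      = (1 - q) * ∑' i : ℕ, (∑' j : ℕ, p (i+1+j)) * q ^ i := by
  set G : ℕ × ℕ → ℝ := fun x => if x.2 < x.1 then p x.1 * q ^ x.2 else 0 with hG
  have hGnn : 0 ≤ G := by
    intro x
    by_cases h : x.2 < x.1 <;>
      simp [hG, h, mul_nonneg (hnn x.1) (pow_nonneg hq0 _)]
  have hrow : ∀ k, Summable (fun i => G (k, i)) := by
    intro k
    apply summable_of_ne_finset_zero (s := Finset.range k)
    intro i hi
    simp only [Finset.mem_range, not_lt] at hi
    simp [hG, not_lt_of_ge hi]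
  have hrowsum : ∀ k, ∑' i, G (k, i) = p k * ∑ i ∈ Finset.range k, q ^ i := by
    intro k
    rw [tsum_eq_sum (s := Finset.range k) (by
      intro i hi
      simp only [Finset.mem_range, not_lt] at hi
      simp [hG, not_lt_of_ge hi])]
    rw [Finset.mul_sum]
    apply Finset.sum_congr rfl
    intro i hi
    simp only [Finset.mem_range] at hi
    simp [hG, hi]
  have hgeo : Summable (fun i : ℕ => q ^ i) := summable_geometric_of_lt_one hq0 hq1
  have hrssum : Summable (fun k => p k * ∑ i ∈ Finset.range k, q ^ i) := by
    apply Summable.of_nonneg_of_le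
      (fun k => mul_nonneg (hnn k) (Finset.sum_nonneg fun i _ => pow_nonneg hq0 i))
      (fun k => ?_) (hp.mul_right (1 - q)⁻¹)
    have h1 : ∑ i ∈ Finset.range k, q ^ i ≤ (1 - q)⁻¹ := by
      have := Summable.sum_le_tsum (Finset.range k) (fun i _ => pow_nonneg hq0 i) hgeo
      rwa [tsum_geometric_of_lt_one hq0 hq1] at this
    exact mul_le_mul_of_nonneg_left h1 (hnn k)
  have hGsum : Summable G := by
    rw [summable_prod_of_nonneg hGnn]
    refine ⟨hrow, ?_⟩
    simp only [hrowsum]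
    exact hrssum
  have hcol : ∀ i, Summable (fun k => G (k, i)) := by
    intro i
    apply Summable.of_nonneg_of_le (fun k => hGnn (k, i)) (fun k => ?_) hp
    by_cases h : i < k
    · simp only [hG, if_pos h]
      calc p k * q ^ i ≤ p k * 1 :=
        mul_le_mul_of_nonneg_left (pow_le_one₀ hq0 hq1.le) (hnn k)
        _ = p k := mul_one _
    · simp [hG, h, hnn k]
  have hway1 : ∑' x, G x = ∑' k, p k * ∑ i ∈ Finset.range k, q ^ i := by
    rw [Summable.tsum_prod' hGsum hrow]; exact tsum_congr hrowsum
  have hGsum' : Summable (fun x : ℕ × ℕ => G (x.2, x.1)) := hGsum.prod_symm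
  have hway2 : ∑' x, G x = ∑' i, (∑' j : ℕ, p (i+1+j)) * q ^ i := by
    rw [← (Equiv.prodComm ℕ ℕ).tsum_eq G]
    show ∑' x : ℕ × ℕ, G (x.2, x.1) = _
    rw [Summable.tsum_prod' hGsum' hcol]
    apply tsum_congr
    intro i
    have : (fun k => G (k, i)) = fun k => (if i < k then p k else 0) * q ^ i := by
      funext k
      by_cases h : i < k <;> simp [hG, h]
    rw [show ∑' k, G (k, i) = ∑' k, (if i < k then p k else 0) * q ^ i from
      tsum_congr fun k => by by_cases h : i < k <;> simp [hG, h]]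
    rw [tsum_mul_right, tail_ite_eq p i]
  calc ∑' k : ℕ, p k * (1 - q ^ k)
      = ∑' k, (1 - q) * (p k * ∑ i ∈ Finset.range k, q ^ i) := by
        apply tsum_congr
        intro k
        have h := geom_sum_mul q k
        linear_combination (p k) * h
    _ = (1 - q) * ∑' k, p k * ∑ i ∈ Finset.range k, q ^ i := tsum_mul_left
    _ = (1 - q) * ∑' i : ℕ, (∑' j : ℕ, p (i+1+j)) * q ^ i := by rw [← hway1, hway2]

theorem mhr_expectation_lower_bound (p : ℕ → ℝ) (hp0 : p 0 = 0) (hnn : ∀ k, 0 ≤ p k)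
    (hsum : ∑' k, p k = 1)
    (T : ℕ → ℝ) (hT : ∀ k, T k = ∑' j : ℕ, p (k + j))
    (hMHR : ∀ k, 1 ≤ k → T (k + 2) / T (k + 1) ≤ T (k + 1) / T k)
    (μ : ℝ) (hμ : 1 ≤ μ) (hms : Summable (fun k : ℕ => p k * k))
    (hmean : ∑' k : ℕ, p k * k = μ) :
    1 / (2 - 1 / μ) ≤ ∑' k : ℕ, p k * (1 - (1 - 1 / μ) ^ k) := by
  have hμ0 : 0 < μ := lt_of_lt_of_le one_pos hμ
  set q : ℝ := 1 - 1 / μ with hqdef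
  have hq0 : 0 ≤ q := by
    have h2 : 1 / μ ≤ 1 := by
      rw [div_le_one hμ0]; exact hμ
    rw [hqdef]; linarith
  have hq1 : q < 1 := by
    have h2 : 0 < 1 / μ := by positivity
    rw [hqdef]; linarith
  -- summability of p
  have hps : Summable p := by
    by_contra hcon
    rw [tsum_eq_zero_of_not_summable hcon] at hsum
    norm_num at hsum
  -- tail sums
  have htail : ∀ k, T (k + 1) = ∑' j : ℕ, p (k + 1 + j) := fun k => hT (k+1)
  have hTnn : ∀ k, 0 ≤ T k := by
    intro k
    rw [hT k]
    exact tsum_nonneg fun j => hnn _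
  have hts : ∀ k, Summable (fun j => p (k + j)) := by
    intro k
    apply hps.comp_injective
    intro a b h
    omega
  have hTrec : ∀ k, T k = p k + T (k+1) := by
    intro k
    have he : (∑' j : ℕ, p (k+(j+1))) = ∑' j : ℕ, p (k+1+j) :=
      tsum_congr fun j => by congr 1; omega
    rw [hT k, hT (k+1), Summable.tsum_eq_zero_add (hts k), he]
    norm_num
  have hT0 : T 0 = 1 := by
    rw [hT 0]
    simpa using hsum
  have hT1 : T 1 = 1 := by
    have := hTrec 0
    rw [hT0, hp0] at this
    linarith
  have hmono : ∀ k, T (k+1) ≤ T k := by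
    intro k
    have := hTrec k
    have := hnn k
    linarith
  -- mean identity
  obtain ⟨htsum_summ', htsum_eq'⟩ := mean_tails p hnn hps hms
  have hTsumm : Summable (fun k => T (k+1)) := htsum_summ'.congr fun k => (htail k).symm
  have hTsum : ∑' k, T (k+1) = μ := by
    rw [show (fun k : ℕ => T (k+1)) = fun k : ℕ => ∑' j : ℕ, p (k+1+j) from funext htail]
    rw [htsum_eq', hmean]
  -- geometric facts
  have hgeo : Summable (fun i : ℕ => q ^ i) := summable_geometric_of_lt_one hq0 hq1
  have h1mq : 1 - q = 1 / μ := by simp [hqdef]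
  have hgsum : ∑' i : ℕ, q ^ i = μ := by
    rw [tsum_geometric_of_lt_one hq0 hq1, h1mq, one_div, inv_inv]
  -- summability of weighted sums
  have hqi1 : ∀ i : ℕ, q ^ i ≤ 1 := fun i => pow_le_one₀ hq0 hq1.le
  have hST : Summable (fun i => T (i+1) * q ^ i) := by
    apply Summable.of_nonneg_of_le
      (fun i => mul_nonneg (hTnn _) (pow_nonneg hq0 _)) (fun i => ?_) hTsumm
    calc T (i+1) * q ^ i ≤ T (i+1) * 1 := mul_le_mul_of_nonneg_left (hqi1 i) (hTnn _)
      _ = T (i+1) := mul_one _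
  have hgg : Summable (fun i : ℕ => q ^ i * q ^ i) := by
    apply Summable.of_nonneg_of_le
      (fun i => mul_nonneg (pow_nonneg hq0 _) (pow_nonneg hq0 _)) (fun i => ?_) hgeo
    calc q ^ i * q ^ i ≤ q ^ i * 1 := mul_le_mul_of_nonneg_left (hqi1 i) (pow_nonneg hq0 _)
      _ = q ^ i := mul_one _
  -- the crossing inequality
  set c : ℕ → ℝ := fun i => T (i+1) - q ^ i with hcdef
  have hcs : Summable c := hTsumm.sub hgeo
  have hctsum : ∑' i, c i = 0 := by
    have he : ∑' i, c i = ∑' i, (T (i+1) - q ^ i) := tsum_congr fun i => rfl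
    rw [he, Summable.tsum_sub hTsumm hgeo, hTsum, hgsum]
    ring
  have hcross := mhr_crossing T q hq0 hT1 hTnn hmono hMHR
  have hkey : 0 ≤ ∑' i, c i * q ^ i := by
    by_cases hall : ∀ i, 0 ≤ c i
    · exact tsum_nonneg fun i => mul_nonneg (hall i) (pow_nonneg hq0 _)
    · push_neg at hall
      have hexm : ∃ m, c m < 0 := hall
      set m := Nat.find hexm with hmdef
      have hm : c m < 0 := Nat.find_spec hexm
      have hbefore : ∀ i, i < m → 0 ≤ c i := by
        intro i hi
        have := Nat.find_min hexm hi
        linarith [not_lt.mp this]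
      have hafter : ∀ i, m ≤ i → c i ≤ 0 := by
        intro i hi
        have hTm : T (m+1) < q ^ m := by
          have : c m = T (m+1) - q ^ m := rfl
          linarith [hm]
        have := hcross m i hi hTm
        simp only [hcdef]
        linarith
      have hcw : Summable (fun i => c i * q ^ i) := by
        have : (fun i => c i * q ^ i) = fun i => T (i+1) * q ^ i - q ^ i * q ^ i := by
          funext i; simp [hcdef]; ring
        rw [this]
        exact hST.sub hgg
      have hcm : Summable (fun i => c i * q ^ m) := hcs.mul_right _
      have hterm : ∀ i, c i * q ^ m ≤ c i * q ^ i := by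
        intro i
        rcases lt_or_ge i m with h | h
        · exact mul_le_mul_of_nonneg_left
            (pow_le_pow_of_le_one hq0 hq1.le (le_of_lt h)) (hbefore i h)
        · exact mul_le_mul_of_nonpos_left
            (pow_le_pow_of_le_one hq0 hq1.le h) (hafter i h)
      calc (0:ℝ) = (∑' i, c i) * q ^ m := by rw [hctsum]; ring
        _ = ∑' i, c i * q ^ m := tsum_mul_right.symm
        _ ≤ ∑' i, c i * q ^ i := Summable.tsum_le_tsum hterm hcm hcw
  -- conclude
  have hSgeq : ∑' i, q ^ i * q ^ i ≤ ∑' i, T (i+1) * q ^ i := by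
    have h := Summable.tsum_sub hST hgg
    have h2 : ∑' i, (T (i+1) * q ^ i - q ^ i * q ^ i) = ∑' i, c i * q ^ i := by
      apply tsum_congr
      intro i
      simp [hcdef]; ring
    have h3 : 0 ≤ ∑' i, T (i+1) * q ^ i - ∑' i, q ^ i * q ^ i := by
      rw [← h, h2]; exact hkey
    linarith
  have hq2 : q ^ 2 < 1 := by nlinarith
  have hq2' : (0:ℝ) ≤ q ^ 2 := by positivity
  have hg2 : ∑' i : ℕ, q ^ i * q ^ i = (1 - q ^ 2)⁻¹ := by
    have : (fun i : ℕ => q ^ i * q ^ i) = fun i : ℕ => (q ^ 2) ^ i := by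
      funext i
      rw [← pow_add, show i + i = 2 * i by ring, pow_mul]
    rw [this, tsum_geometric_of_lt_one hq2' hq2]
  have heq := expect_eq p hnn hps q hq0 hq1
  have heq2 : ∑' k : ℕ, p k * (1 - q ^ k) = (1 - q) * ∑' i, T (i+1) * q ^ i := by
    rw [heq]
    congr 1
    exact tsum_congr fun i => by rw [htail i]
  rw [show (2 - 1/μ) = 1 + q from by rw [hqdef]; ring]
  rw [heq2]
  have hlb : (1 - q) * (1 - q ^ 2)⁻¹ ≤ (1 - q) * ∑' i, T (i+1) * q ^ i := by
    apply mul_le_mul_of_nonneg_left _ (by linarith)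
    rw [← hg2]; exact hSgeq
  have hfin : 1 / (1 + q) = (1 - q) * (1 - q ^ 2)⁻¹ := by
    have h1 : (1:ℝ) + q ≠ 0 := by linarith
    have h2 : (1:ℝ) - q ^ 2 ≠ 0 := by nlinarith
    field_simp
    ring
  calc 1 / (1 + q) = (1 - q) * (1 - q ^ 2)⁻¹ := hfin
    _ ≤ (1 - q) * ∑' i, T (i+1) * q ^ i := hlb
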